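/- Let Q(V,E) be a chordal graph with cliques C_1,...,C_l ordered to satisfy the running intersection property. Then for any negative semidefinite matrix H in S^n whose sparsity graph is a subgraph of Q, there exist negative semidefinite matrices H^i in S^{|C_i|}, i=1,...,l, such that H = sum_{i=1}^l E_i H^i E_i^T, where E_i is the 0-1 matrix selecting the rows/columns indexed by C_i. -/

import Mathlib

open Matrix Finset

/-- A simple graph is chordal if every cycle of length at least four has a chord,
i.e. an edge of the graph joining two vertices of the cycle that is not an edge
of the cycle itself. -/
def SimpleGraph.IsChordal {V : Type*} (G : SimpleGraph V) : Prop :=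
  ∀ (v : V) (w : G.Walk v v), w.IsCycle → 4 ≤ w.length →
    ∃ a b, a ∈ w.support ∧ b ∈ w.support ∧ G.Adj a b ∧ ¬ w.toSubgraph.Adj a b

/-- `s` is a maximal clique of `G`. -/
def SimpleGraph.IsMaxClique {V : Type*} (G : SimpleGraph V) (s : Finset V) : Prop :=
  G.IsClique ↑s ∧ ∀ t : Finset V, G.IsClique ↑t → s ⊆ t → s = t

/-- The 0-1 matrix whose columns are the standard basis vectors indexed by the
elements of `C`, i.e. `E = [e_{j₁} … e_{j_r}]` for `C = {j₁ < … < j_r}`. -/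
def cliqueSel {n : ℕ} (C : Finset (Fin n)) : Matrix (Fin n) {x // x ∈ C} ℝ :=
  fun i j => if i = (j : Fin n) then 1 else 0



lemma cliqueSel_sandwich_apply {n : ℕ} (J : Finset (Fin n))
    (M : Matrix {x // x ∈ J} {x // x ∈ J} ℝ) (u v : Fin n) :
    (cliqueSel J * M * (cliqueSel J)ᵀ) u v =
      if hu : u ∈ J then (if hv : v ∈ J then M ⟨u, hu⟩ ⟨v, hv⟩ else 0) else 0 := by
  classical
  rw [Matrix.mul_apply]
  have h1 : ∀ k : {x // x ∈ J}, (cliqueSel J * M) u k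
      = if hu : u ∈ J then M ⟨u, hu⟩ k else 0 := by
    intro k
    rw [Matrix.mul_apply]
    by_cases hu : u ∈ J
    · rw [dif_pos hu, Finset.sum_eq_single (⟨u, hu⟩ : {x // x ∈ J})]
      · simp [cliqueSel]
      · intro j _ hj
        have : u ≠ (j : Fin n) := fun h => hj (Subtype.ext h.symm)
        simp [cliqueSel, this]
      · simp
    · rw [dif_neg hu]
      apply Finset.sum_eq_zero
      intro j _
      have : u ≠ (j : Fin n) := fun h => hu (h ▸ j.2)
      simp [cliqueSel, this]
  simp only [h1, Matrix.transpose_apply]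
  by_cases hu : u ∈ J
  · simp only [dif_pos hu]
    by_cases hv : v ∈ J
    · rw [dif_pos hv, Finset.sum_eq_single (⟨v, hv⟩ : {x // x ∈ J})]
      · simp [cliqueSel]
      · intro j _ hj
        have : v ≠ (j : Fin n) := fun h => hj (Subtype.ext h.symm)
        simp [cliqueSel, this]
      · simp
    · rw [dif_neg hv]
      apply Finset.sum_eq_zero
      intro j _
      have : v ≠ (j : Fin n) := fun h => hv (h ▸ j.2)
      simp [cliqueSel, this]
  · simp only [dif_neg hu]
    simp

lemma cliqueSel_sandwich_of_support {n : ℕ} (J : Finset (Fin n))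
    (M : Matrix (Fin n) (Fin n) ℝ)
    (h : ∀ u v, M u v ≠ 0 → u ∈ J ∧ v ∈ J) :
    cliqueSel J * (M.submatrix (Subtype.val : {x // x ∈ J} → Fin n) Subtype.val) *
      (cliqueSel J)ᵀ = M := by
  ext u v
  erw [cliqueSel_sandwich_apply]
  by_cases hu : u ∈ J
  · by_cases hv : v ∈ J
    · simp [hu, hv]
    · rw [dif_pos hu, dif_neg hv]
      by_contra hne
      exact hv (h u v fun h0 => hne h0.symm).2
  · rw [dif_neg hu]
    by_contra hne
    exact hu (h u v fun h0 => hne h0.symm).1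

lemma gram_posSemidef {E : Type*} [NormedAddCommGroup E] [InnerProductSpace ℝ E]
    {ι : Type*} [Fintype ι] (f : ι → E) :
    Matrix.PosSemidef (Matrix.of fun u v => (inner ℝ (f u) (f v) : ℝ)) := by
  rw [Matrix.posSemidef_iff_dotProduct_mulVec]
  constructor
  · ext u v
    simp [Matrix.conjTranspose_apply, real_inner_comm (f v)]
  · intro x
    have key : (star x) ⬝ᵥ ((Matrix.of fun u v => (inner ℝ (f u) (f v) : ℝ)) *ᵥ x)
        = inner ℝ (∑ u, x u • f u) (∑ v, x v • f v) := by
      rw [sum_inner]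
      simp only [inner_sum, real_inner_smul_left, real_inner_smul_right]
      simp [dotProduct, Matrix.mulVec, Finset.mul_sum, mul_comm, mul_left_comm]
    rw [key]
    exact real_inner_self_nonneg

lemma exists_maxClique_superset {n : ℕ} (Q : SimpleGraph (Fin n)) (s : Finset (Fin n))
    (hs : Q.IsClique ↑s) : ∃ t, Q.IsMaxClique t ∧ s ⊆ t := by
  classical
  obtain ⟨t, ht, hmax⟩ := Finset.exists_max_image
    ((Finset.univ : Finset (Finset (Fin n))).filter fun t : Finset (Fin n) => Q.IsClique ↑t ∧ s ⊆ t)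
    Finset.card ⟨s, by simp [hs]⟩
  simp only [Finset.mem_filter, Finset.mem_univ, true_and] at ht hmax
  refine ⟨t, ⟨ht.1, ?_⟩, ht.2⟩
  intro t' ht' hsub
  exact Finset.eq_of_subset_of_card_le hsub (hmax t' ⟨ht', ht.2.trans hsub⟩)

theorem aux_decomp {n : ℕ} : ∀ (l : ℕ) (C : Fin l → Finset (Fin n))
    (_hRIP : ∀ i : Fin l, (0 : ℕ) < i.1 →
      ∃ p : Fin l, p < i ∧ C i ∩ (Finset.Iio i).biUnion C ⊆ C p)
    (H : Matrix (Fin n) (Fin n) ℝ)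
    (_hneg : (-H).PosSemidef)
    (_hsupp : ∀ u v, H u v ≠ 0 → ∃ k, u ∈ C k ∧ v ∈ C k),
    ∃ Hc : (i : Fin l) → Matrix {x // x ∈ C i} {x // x ∈ C i} ℝ,
      (∀ i, (-(Hc i)).PosSemidef) ∧
      H = ∑ i, cliqueSel (C i) * Hc i * (cliqueSel (C i))ᵀ := by
  intro l
  induction l with
  | zero =>
    intro C hRIP H hneg hsupp
    refine ⟨fun i => i.elim0, fun i => i.elim0, ?_⟩
    have hH0 : H = 0 := by
      ext u v
      by_contra h
      obtain ⟨k, -⟩ := hsupp u v h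
      exact k.elim0
    simp [hH0]
  | succ l IH =>
    intro C hRIP H hneg hsupp
    classical
    set J : Finset (Fin n) := C (Fin.last l) with hJdef
    set U : Finset (Fin n) := Finset.univ.biUnion (fun k : Fin l => C k.castSucc) with hUdef
    set A : Finset (Fin n) := J \ U with hAdef
    -- rows indexed by A have support in J
    have hrow : ∀ a ∈ A, ∀ v, H a v ≠ 0 → v ∈ J := by
      intro a ha v hv
      obtain ⟨k, hak, hvk⟩ := hsupp a v hv
      rcases eq_or_ne k (Fin.last l) with rfl | hk
      · exact hvk
      · exfalso
        obtain ⟨k', rfl⟩ : ∃ k', k = Fin.castSucc k' :=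
          ⟨k.castPred hk, (Fin.castSucc_castPred k hk).symm⟩
        have : a ∈ U := Finset.mem_biUnion.mpr ⟨k', Finset.mem_univ _, hak⟩
        exact (Finset.mem_sdiff.mp ha).2 this
    -- Gram factorization of -H
    obtain ⟨B, hB⟩ : ∃ B : Matrix (Fin n) (Fin n) ℝ, -H = Bᴴ * B := by
      open scoped MatrixOrder in exact CStarAlgebra.nonneg_iff_eq_star_mul_self.mp hneg.nonneg
    set f : Fin n → EuclideanSpace ℝ (Fin n) := fun v => WithLp.toLp 2 (fun i => B i v) with hfdef
    have hPf : ∀ u v, (-H) u v = inner ℝ (f u) (f v) := by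
      intro u v
      rw [hB]
      simp [Matrix.mul_apply, Matrix.conjTranspose_apply, hfdef, PiLp.inner_apply,
        RCLike.inner_apply, conj_trivial, EuclideanSpace]
      exact Finset.sum_congr rfl fun _ _ => mul_comm _ _
    set K : Submodule ℝ (EuclideanSpace ℝ (Fin n)) := Submodule.span ℝ (f '' ↑A) with hKdef
    set w : Fin n → EuclideanSpace ℝ (Fin n) :=
      fun v => (Submodule.orthogonalProjection K (f v) : EuclideanSpace ℝ (Fin n)) with hwdef
    have hwK : ∀ v, w v ∈ K := fun v => (Submodule.orthogonalProjection K (f v)).2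
    have hperp : ∀ v, ∀ y ∈ K, (inner ℝ y (f v - w v) : ℝ) = 0 := by
      intro v y hy
      have := Submodule.sub_starProjection_mem_orthogonal (K := K) (f v)
      exact (Submodule.mem_orthogonal K _).mp this y hy
    have hwA : ∀ a ∈ A, w a = f a := by
      intro a ha
      exact K.starProjection_eq_self_iff.mpr (Submodule.subset_span ⟨a, ha, rfl⟩)
    set G : Matrix (Fin n) (Fin n) ℝ := Matrix.of fun u v => (inner ℝ (w u) (w v) : ℝ) with hGdef
    have hGapp : ∀ u v, G u v = (inner ℝ (w u) (w v) : ℝ) := fun u v => rfl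
    have hG1 : ∀ u v, G u v = (inner ℝ (w u) (f v) : ℝ) := by
      intro u v
      have h0 := hperp v (w u) (hwK u)
      rw [inner_sub_right] at h0
      rw [hGapp]
      linarith
    -- support of G
    have hGsuppR : ∀ u v, v ∉ J → G u v = 0 := by
      intro u v hv
      rw [hG1]
      have : ∀ y ∈ K, (inner ℝ y (f v) : ℝ) = 0 := by
        intro y hy
        induction hy using Submodule.span_induction with
        | mem y hy =>
          obtain ⟨a, ha, rfl⟩ := hy
          have hHav : H a v = 0 := by
            by_contra h0
            exact hv (hrow a ha v h0)
          have := hPf a v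
          rw [Matrix.neg_apply, hHav, neg_zero] at this
          exact this.symm
        | zero => simp
        | add y z _ _ hy hz => rw [inner_add_left, hy, hz, add_zero]
        | smul c y _ hy => rw [real_inner_smul_left, hy, mul_zero]
      exact this (w u) (hwK u)
    have hGsym : ∀ u v, G u v = G v u := by
      intro u v; rw [hGapp, hGapp, real_inner_comm]
    have hGsuppL : ∀ u v, u ∉ J → G u v = 0 := by
      intro u v hu; rw [hGsym]; exact hGsuppR v u hu
    -- the remainder is a Gram matrix
    have hrem : ∀ u v, (-H) u v - G u v = (inner ℝ (f u - w u) (f v - w v) : ℝ) := by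
      intro u v
      have e1 : (inner ℝ (f u - w u) (f v - w v) : ℝ)
          = inner ℝ (f u) (f v - w v) - inner ℝ (w u) (f v - w v) := by
        rw [inner_sub_left]
      have e2 : (inner ℝ (w u) (f v - w v) : ℝ) = 0 := hperp v (w u) (hwK u)
      have e3 : (inner ℝ (f u) (f v - w v) : ℝ) = inner ℝ (f u) (f v) - inner ℝ (f u) (w v) := by
        rw [inner_sub_right]
      have e4 : (inner ℝ (f u) (w v) : ℝ) = G u v := by
        rw [real_inner_comm, ← hG1, hGsym]
      rw [e1, e2, e3, e4, sub_zero, ← hPf]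
    have hremA : ∀ a ∈ A, ∀ v, (-H) a v - G a v = 0 := by
      intro a ha v
      rw [hrem, hwA a ha, sub_self, inner_zero_left]
    have hremA' : ∀ a ∈ A, ∀ v, (-H) v a - G v a = 0 := by
      intro a ha v
      rw [hrem, hwA a ha, sub_self, inner_zero_right]
    -- residual matrix
    set H' : Matrix (Fin n) (Fin n) ℝ := H + G with hH'def
    have hneg' : (-H').PosSemidef := by
      have : (-H') = Matrix.of fun u v => (inner ℝ (f u - w u) (f v - w v) : ℝ) := by
        ext u v
        rw [Matrix.of_apply, ← hrem]
        simp [hH'def]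
        ring
      rw [this]
      exact gram_posSemidef _
    have hH'A : ∀ u v, u ∈ A ∨ v ∈ A → H' u v = 0 := by
      intro u v huv
      have : -(H' u v) = (-H) u v - G u v := by simp [hH'def]; ring
      rcases huv with hu | hv
      · have h0 := hremA u hu v
        rw [← this] at h0; linarith
      · have h0 := hremA' v hv u
        rw [← this] at h0; linarith
    -- the restricted clique family
    set C' : Fin l → Finset (Fin n) := fun k => C k.castSucc with hC'def
    have hRIP' : ∀ i : Fin l, (0 : ℕ) < i.1 →
        ∃ p : Fin l, p < i ∧ C' i ∩ (Finset.Iio i).biUnion C' ⊆ C' p := by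
      intro i hi
      obtain ⟨p, hp, hsub⟩ := hRIP i.castSucc (by simpa using hi)
      have hpne : p ≠ Fin.last l :=
        Fin.ne_of_lt (hp.trans (Fin.castSucc_lt_last i))
      obtain ⟨p', rfl⟩ : ∃ p', p = Fin.castSucc p' :=
        ⟨p.castPred hpne, (Fin.castSucc_castPred p hpne).symm⟩
      refine ⟨p', Fin.castSucc_lt_castSucc_iff.mp hp, ?_⟩
      intro x hx
      rw [Finset.mem_inter] at hx
      apply hsub
      rw [Finset.mem_inter]
      refine ⟨hx.1, ?_⟩
      obtain ⟨j, hj, hxj⟩ := Finset.mem_biUnion.mp hx.2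
      exact Finset.mem_biUnion.mpr ⟨j.castSucc,
        Finset.mem_Iio.mpr (Fin.castSucc_lt_castSucc_iff.mpr (Finset.mem_Iio.mp hj)), hxj⟩
    -- both in J, neither in A ⇒ common earlier clique
    have hboth : ∀ u v, u ∈ J → v ∈ J → u ∉ A → v ∉ A →
        ∃ k : Fin l, u ∈ C' k ∧ v ∈ C' k := by
      intro u v huJ hvJ huA hvA
      have huU : u ∈ U := by
        by_contra h
        exact huA (Finset.mem_sdiff.mpr ⟨huJ, h⟩)
      have hvU : v ∈ U := by
        by_contra h
        exact hvA (Finset.mem_sdiff.mpr ⟨hvJ, h⟩)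
      have hlpos : (0 : ℕ) < (Fin.last l).1 := by
        obtain ⟨k0, -, -⟩ := Finset.mem_biUnion.mp huU
        simpa using Nat.lt_of_le_of_lt (Nat.zero_le _) k0.2
      obtain ⟨p, hp, hsub⟩ := hRIP (Fin.last l) hlpos
      have hpne : p ≠ Fin.last l := Fin.ne_of_lt hp
      obtain ⟨p', rfl⟩ : ∃ p', p = Fin.castSucc p' :=
        ⟨p.castPred hpne, (Fin.castSucc_castPred p hpne).symm⟩
      have hUsub : ∀ x, x ∈ J → x ∈ U → x ∈ C (Fin.castSucc p') := by
        intro x hxJ hxU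
        apply hsub
        rw [Finset.mem_inter]
        obtain ⟨k0, -, hk0⟩ := Finset.mem_biUnion.mp hxU
        exact ⟨hxJ, Finset.mem_biUnion.mpr ⟨k0.castSucc,
          Finset.mem_Iio.mpr (Fin.castSucc_lt_last k0), hk0⟩⟩
      exact ⟨p', hUsub u huJ huU, hUsub v hvJ hvU⟩
    have hsupp' : ∀ u v, H' u v ≠ 0 → ∃ k, u ∈ C' k ∧ v ∈ C' k := by
      intro u v h
      have huA : u ∉ A := fun hu => h (hH'A u v (Or.inl hu))
      have hvA : v ∉ A := fun hv => h (hH'A u v (Or.inr hv))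
      by_cases hG : G u v = 0
      · have hH : H u v ≠ 0 := by
          intro h0
          apply h
          rw [hH'def]
          simp [h0, hG]
        obtain ⟨k, hk1, hk2⟩ := hsupp u v hH
        rcases eq_or_ne k (Fin.last l) with rfl | hk
        · exact hboth u v hk1 hk2 huA hvA
        · obtain ⟨k', rfl⟩ : ∃ k', k = Fin.castSucc k' :=
            ⟨k.castPred hk, (Fin.castSucc_castPred k hk).symm⟩
          exact ⟨k', hk1, hk2⟩
      · have huJ : u ∈ J := by
          by_contra h0
          exact hG (hGsuppL u v h0)
        have hvJ : v ∈ J := by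
          by_contra h0
          exact hG (hGsuppR u v h0)
        exact hboth u v huJ hvJ huA hvA
    obtain ⟨Hc', hHc'1, hHc'2⟩ := IH C' hRIP' H' hneg' hsupp'
    -- the last block
    set GJ : Matrix {x // x ∈ J} {x // x ∈ J} ℝ :=
      (-G).submatrix Subtype.val Subtype.val with hGJdef
    have hGpsd : G.PosSemidef := gram_posSemidef w
    have hGJneg : (-GJ).PosSemidef := by
      have : -GJ = G.submatrix Subtype.val Subtype.val := by
        ext i j; simp [hGJdef]
      rw [this]
      exact hGpsd.submatrix _
    have hGfull : cliqueSel J * GJ * (cliqueSel J)ᵀ = -G := by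
      apply cliqueSel_sandwich_of_support
      intro u v h
      constructor
      · by_contra h0
        exact h (by simp [hGsuppL u v h0])
      · by_contra h0
        exact h (by simp [hGsuppR u v h0])
    -- assemble
    refine ⟨fun i => Fin.lastCases (motive := fun i => Matrix {x // x ∈ C i} {x // x ∈ C i} ℝ)
      GJ Hc' i, ?_, ?_⟩
    · intro i
      refine Fin.lastCases ?_ ?_ i
      · simpa using hGJneg
      · intro k
        simpa using hHc'1 k
    · rw [Fin.sum_univ_castSucc]
      simp only [Fin.lastCases_castSucc, Fin.lastCases_last]
      rw [hGfull, ← hHc'2]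
      rw [hH'def]
      abel

/-- **Agler's decomposition theorem.**  Let `Q` be a chordal graph on `{1,…,n}` with
maximal cliques `C 0, …, C (l-1)` ordered to satisfy the running intersection
property.  Then any negative semidefinite `H ∈ 𝐒ⁿ` whose sparsity graph is a
subgraph of `Q` can be written as `H = ∑ i, E i * H i * (E i)ᵀ` with each
`H i ∈ 𝐒^{|C i|}` negative semidefinite. -/
theorem agler_chordal_decomposition {n l : ℕ} (Q : SimpleGraph (Fin n))
    (hQ : Q.IsChordal)
    (C : Fin l → Finset (Fin n))
    (hclique : ∀ i, Q.IsMaxClique (C i))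
    (hall : ∀ s : Finset (Fin n), Q.IsMaxClique s → ∃ i, C i = s)
    -- running intersection property of the ordering:
    (hRIP : ∀ i : Fin l, (0 : ℕ) < i.1 →
      ∃ p : Fin l, p < i ∧ C i ∩ (Finset.Iio i).biUnion C ⊆ C p)
    (H : Matrix (Fin n) (Fin n) ℝ)
    (hsymm : H.IsSymm)
    (hneg : (-H).PosSemidef)
    (hsparse : ∀ i j : Fin n, i ≠ j → H i j ≠ 0 → Q.Adj i j) :
    ∃ Hc : (i : Fin l) → Matrix {x // x ∈ C i} {x // x ∈ C i} ℝ,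
      (∀ i, (-(Hc i)).PosSemidef) ∧
      H = ∑ i : Fin l, cliqueSel (C i) * Hc i * (cliqueSel (C i))ᵀ := by
  have hsupp : ∀ u v, H u v ≠ 0 → ∃ k, u ∈ C k ∧ v ∈ C k := by
    intro u v h
    rcases eq_or_ne u v with rfl | hne
    · have hcl : Q.IsClique (↑({u} : Finset (Fin n))) := by
        simp [SimpleGraph.isClique_singleton]
      obtain ⟨t, htmax, hsub⟩ := exists_maxClique_superset Q {u} hcl
      obtain ⟨k, rfl⟩ := hall t htmax
      exact ⟨k, hsub (Finset.mem_singleton_self u), hsub (Finset.mem_singleton_self u)⟩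
    · have hadj : Q.Adj u v := hsparse u v hne h
      have hcl : Q.IsClique (↑({u, v} : Finset (Fin n))) := by
        rw [Finset.coe_pair]
        exact SimpleGraph.isClique_pair.mpr fun _ => hadj
      obtain ⟨t, htmax, hsub⟩ := exists_maxClique_superset Q {u, v} hcl
      obtain ⟨k, rfl⟩ := hall t htmax
      exact ⟨k, hsub (by simp), hsub (by simp)⟩
  exact aux_decomp l C hRIP H hneg hsupp
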